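/- arXiv:1408.3369 — 7 statements merged into one kernel-verified Lean document; each statement's English description precedes it below -/
import Mathlib

section
/- Let V be a real inner product space, W a finite group acting on V by linear isometries, and z, x ∈ V. Assume that for every y in the orbit W • x with y ≠ x there exist h ∈ W and a nonzero vector v ∈ V such that h acts on V as the orthogonal reflection in the hyperplane v^⊥ (i.e. h • u = u − 2(⟪u, v⟫/⟪v, v⟫)·v for all u ∈ V) and ⟪z, v⟫ · ⟪y, v⟫ > 0. Then for every y ∈ W • x with y ≠ x one has ‖z − y‖ < ‖z − x‖, or equivalently ⟪z, y⟫ > ⟪z, x⟫; in particular, the function W → ℝ, w ↦ ‖z − w • x‖, attains its maximum exactly at those w ∈ W with w • x = x. -/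
open scoped InnerProductSpace

/-- Step 1 of the proof of Lemma 3.1 of the paper. -/
theorem stmt_1
    {V : Type*} [NormedAddCommGroup V] [InnerProductSpace ℝ V]
    {W : Type*} [Group W] [Finite W] (ρ : W →* (V ≃ₗᵢ[ℝ] V))
    (z x : V)
    (hsep : ∀ y : V, (∃ w : W, ρ w x = y) → y ≠ x →
      ∃ (h : W) (v : V), v ≠ 0 ∧
        (∀ u : V, ρ h u = u - (2 * ⟪u, v⟫_ℝ / ⟪v, v⟫_ℝ) • v) ∧
        ⟪z, v⟫_ℝ * ⟪y, v⟫_ℝ > 0) :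
    (∀ y : V, (∃ w : W, ρ w x = y) → y ≠ x →
      ‖z - y‖ < ‖z - x‖ ∧ ⟪z, x⟫_ℝ < ⟪z, y⟫_ℝ) ∧
    (∀ w : W, (∀ w' : W, ‖z - ρ w' x‖ ≤ ‖z - ρ w x‖) ↔ ρ w x = x) := by
  -- Key: any maximizer of w ↦ ‖z - ρ w x‖ must send x to x.
  have key : ∀ w : W, (∀ w' : W, ‖z - ρ w' x‖ ≤ ‖z - ρ w x‖) → ρ w x = x := by
    intro w hw
    by_contra hne
    obtain ⟨h, v, hv0, hrefl, hpos⟩ := hsep (ρ w x) ⟨w, rfl⟩ hne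
    set y : V := ρ w x with hy
    set c : ℝ := 2 * ⟪y, v⟫_ℝ / ⟪v, v⟫_ℝ with hc
    have hvv : (0:ℝ) < ⟪v, v⟫_ℝ := lt_of_le_of_ne real_inner_self_nonneg (Ne.symm (inner_self_ne_zero.mpr hv0))
    have hstep : ρ (h * w) x = y - c • v := by
      rw [map_mul]
      exact hrefl y
    have hn' : ‖y - c • v‖ = ‖y‖ := by
      rw [← hstep]
      simp [hy]
    have hcpos : 0 < c * ⟪z, v⟫_ℝ := by
      have : c * ⟪z, v⟫_ℝ = 2 * (⟪z, v⟫_ℝ * ⟪y, v⟫_ℝ) / ⟪v, v⟫_ℝ := by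
        rw [hc]; ring
      rw [this]
      exact div_pos (by linarith) hvv
    have hsq : ‖z - y‖ ^ 2 < ‖z - (y - c • v)‖ ^ 2 := by
      rw [norm_sub_sq_real, norm_sub_sq_real, hn', inner_sub_right,
        real_inner_smul_right]
      linarith
    have hlt : ‖z - y‖ < ‖z - (y - c • v)‖ :=
      lt_of_pow_lt_pow_left₀ 2 (norm_nonneg _) hsq
    have := hw (h * w)
    rw [hstep] at this
    exact absurd this (not_le.mpr hlt)
  obtain ⟨w₀, hw₀⟩ := Finite.exists_max (fun w : W => ‖z - ρ w x‖)
  have hw₀x : ρ w₀ x = x := key w₀ hw₀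
  have hmax : ∀ w' : W, ‖z - ρ w' x‖ ≤ ‖z - x‖ := by
    intro w'; simpa [hw₀x] using hw₀ w'
  have part1 : ∀ y : V, (∃ w : W, ρ w x = y) → y ≠ x →
      ‖z - y‖ < ‖z - x‖ ∧ ⟪z, x⟫_ℝ < ⟪z, y⟫_ℝ := by
    rintro y ⟨w, rfl⟩ hne
    have hle : ‖z - ρ w x‖ ≤ ‖z - x‖ := hmax w
    have hlt : ‖z - ρ w x‖ < ‖z - x‖ := by
      rcases lt_or_eq_of_le hle with h | h
      · exact h
      · exfalso
        exact hne (key w (fun w' => h ▸ hmax w'))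
    refine ⟨hlt, ?_⟩
    have hnorm : ‖ρ w x‖ = ‖x‖ := (ρ w).norm_map x
    have hsq : ‖z - ρ w x‖ ^ 2 < ‖z - x‖ ^ 2 := by
      have := norm_nonneg (z - ρ w x)
      nlinarith
    rw [norm_sub_sq_real, norm_sub_sq_real, hnorm] at hsq
    linarith
  refine ⟨part1, fun w => ⟨key w, ?_⟩⟩
  intro hfix w'
  rw [hfix]
  exact hmax w'
end

section
/- Let R be a commutative ring and (Λ, ≤) a partially ordered set such that for every λ ∈ Λ the set {μ ∈ Λ : μ ≤ λ} is finite. Let M = Λ →₀ R be the free R-module with basis (e_λ)_{λ ∈ Λ}, and let f : M → M be an R-linear map such that for every λ ∈ Λ the element f(e_λ) − e_λ is supported on {μ ∈ Λ : μ < λ}. Then f is bijective. -/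
/-- an `R`-linear endomorphism of a free module with partially ordered basis
(with finite lower sets) which is unipotent lower-triangular with respect to the basis is
bijective. -/
theorem stmt_6
    {R : Type*} [CommRing R] {Λ : Type*} [PartialOrder Λ]
    (hfin : ∀ lam : Λ, {mu : Λ | mu ≤ lam}.Finite)
    (f : (Λ →₀ R) →ₗ[R] (Λ →₀ R))
    (hf : ∀ lam : Λ, ∀ mu ∈ (f (Finsupp.single lam 1) - Finsupp.single lam 1).support,
      mu < lam) :
    Function.Bijective f := by
  classical
  -- well-foundedness of `<`
  have wf : WellFounded ((· < ·) : Λ → Λ → Prop) := by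
    have key : ∀ n : ℕ, ∀ lam : Λ, (hfin lam).toFinset.card ≤ n → Acc (· < ·) lam := by
      intro n
      induction n with
      | zero =>
        intro lam h
        exfalso
        have hmem : lam ∈ (hfin lam).toFinset := by simp
        have := Finset.card_pos.mpr ⟨lam, hmem⟩
        omega
      | succ n ih =>
        intro lam h
        constructor
        intro mu hmu
        apply ih
        have hsub : (hfin mu).toFinset ⊂ (hfin lam).toFinset := by
          constructor
          · intro nu hnu
            simp only [Set.Finite.mem_toFinset, Set.mem_setOf_eq] at *
            exact hnu.trans hmu.le
          · intro hle
            have hmem : lam ∈ (hfin mu).toFinset := hle (by simp)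
            simp only [Set.Finite.mem_toFinset, Set.mem_setOf_eq] at hmem
            exact absurd (lt_of_le_of_lt hmem hmu) (lt_irrefl _)
        have := Finset.card_lt_card hsub
        omega
    exact ⟨fun lam => key _ lam le_rfl⟩
  have hg : ∀ lam mu : Λ,
      (f (Finsupp.single lam 1)) mu - (Finsupp.single lam 1) mu ≠ 0 → mu < lam := by
    intro lam mu h
    apply hf lam mu
    rw [Finsupp.mem_support_iff, Finsupp.sub_apply]
    exact h
  constructor
  · -- injectivity
    rw [injective_iff_map_eq_zero]
    intro x hx
    by_contra hne
    obtain ⟨lam, hlam, hmax⟩ : ∃ lam ∈ x.support, ∀ mu ∈ x.support, ¬ lam < mu := by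
      obtain ⟨lam, hl⟩ := Finset.exists_maximal (Finsupp.support_nonempty_iff.mpr hne)
      exact ⟨lam, hl.1, fun mu hmu h => absurd (hl.2 hmu h.le) (not_le_of_gt h)⟩
    -- compute (f x) lam = x lam
    have hcalc : (f x) lam = x lam := by
      conv_lhs => rw [← x.sum_single, map_finsuppSum]
      rw [Finsupp.sum, Finset.sum_apply']
      have hterm : ∀ mu ∈ x.support,
          (f (Finsupp.single mu (x mu))) lam = (Finsupp.single mu (x mu)) lam := by
        intro mu hmu
        have h1 : Finsupp.single mu (x mu) = (x mu) • Finsupp.single mu (1 : R) := by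
          simp
        rw [h1, map_smul, Finsupp.smul_apply, Finsupp.smul_apply]
        congr 1
        by_contra hne2
        exact hmax mu hmu (hg mu lam (sub_ne_zero.mpr hne2))
      rw [Finset.sum_congr rfl hterm, ← Finset.sum_apply']
      conv_rhs => rw [← x.sum_single]
      rfl
    rw [hx] at hcalc
    exact Finsupp.mem_support_iff.mp hlam hcalc.symm
  · -- surjectivity
    have hrange : ∀ lam : Λ, Finsupp.single lam (1 : R) ∈ LinearMap.range f := by
      intro lam
      induction lam using WellFounded.induction wf with
      | _ lam ih =>
        set g := f (Finsupp.single lam 1) - Finsupp.single lam 1 with hgdef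
        have hgmem : g ∈ LinearMap.range f := by
          rw [← g.sum_single, Finsupp.sum]
          apply Submodule.sum_mem
          intro mu hmu
          rw [show Finsupp.single mu (g mu) = (g mu) • Finsupp.single mu (1 : R) by simp]
          exact Submodule.smul_mem _ _ (ih mu (hf lam mu hmu))
        have heq : Finsupp.single lam (1 : R) = f (Finsupp.single lam 1) - g := by
          rw [hgdef]; abel
        rw [heq]
        exact Submodule.sub_mem _ ⟨_, rfl⟩ hgmem
    intro y
    have : y ∈ LinearMap.range f := by
      rw [← y.sum_single, Finsupp.sum]
      apply Submodule.sum_mem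
      intro mu hmu
      rw [show Finsupp.single mu (y mu) = (y mu) • Finsupp.single mu (1 : R) by simp]
      exact Submodule.smul_mem _ _ (hrange mu)
    exact this
end

section
/- Let R be a discrete valuation ring with residue field k. Let (C_i)_{i ∈ ℤ} be a complex of finitely generated free R-modules with differentials d_i : C_{i+1} → C_i satisfying d_{i−1} ∘ d_i = 0, and suppose there exists N such that C_i = 0 for all i > N. If the reduced complex (C_i ⊗_R k, d_i ⊗ id_k) is exact, i.e. for every i the kernel of C_i ⊗_R k → C_{i−1} ⊗_R k equals the image of C_{i+1} ⊗_R k → C_i ⊗_R k, then the complex (C_i, d_i) is exact, i.e. ker d_{i−1} = im d_i for every i. -/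
open TensorProduct

/-- Lemma 6.3 of the paper: a bounded-above complex of finitely generated
free modules over a discrete valuation ring is exact if its reduction modulo the maximal
ideal is exact. -/
theorem stmt_7
    {R : Type*} [CommRing R] [IsDomain R] [IsDiscreteValuationRing R]
    (C : ℤ → Type*) [∀ i, AddCommGroup (C i)] [∀ i, Module R (C i)]
    [∀ i, Module.Free R (C i)] [∀ i, Module.Finite R (C i)]
    (d : ∀ i : ℤ, C (i + 1) →ₗ[R] C i)
    (hdd : ∀ i : ℤ, (d i).comp (d (i + 1)) = 0)
    (hbdd : ∃ N : ℤ, ∀ i > N, ∀ x : C i, x = 0)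
    (hred : ∀ i : ℤ,
      LinearMap.ker (LinearMap.rTensor (IsLocalRing.ResidueField R) (d i)) =
      LinearMap.range (LinearMap.rTensor (IsLocalRing.ResidueField R) (d (i + 1)))) :
    ∀ i : ℤ, LinearMap.ker (d i) = LinearMap.range (d (i + 1)) := by
  intro i
  obtain ⟨ϖ, hϖ⟩ := IsDiscreteValuationRing.exists_irreducible R
  have hB_le_K : LinearMap.range (d (i + 1)) ≤ LinearMap.ker (d i) := by
    rintro _ ⟨y, rfl⟩
    simpa using LinearMap.congr_fun (hdd i) y
  refine le_antisymm ?_ hB_le_K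
  -- Main step: ker ≤ range ⊔ 𝔪 • ker, then Nakayama.
  have key : LinearMap.ker (d i) ≤
      LinearMap.range (d (i + 1)) ⊔
        (IsLocalRing.maximalIdeal R) • LinearMap.ker (d i) := by
    intro x hx
    -- x ⊗ 1 is killed by the reduced differential
    have hx1 : (x ⊗ₜ[R] (1 : IsLocalRing.ResidueField R)) ∈
        LinearMap.ker (LinearMap.rTensor (IsLocalRing.ResidueField R) (d i)) := by
      simp only [LinearMap.mem_ker, LinearMap.rTensor_tmul]
      rw [show d i x = 0 from hx]
      simp
    rw [hred i] at hx1
    obtain ⟨t, ht⟩ := hx1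
    -- lift t to an element y of C (i+2)
    obtain ⟨ybar, hybar⟩ := Submodule.Quotient.mk_surjective _
      (tensorQuotEquivQuotSMul (C (i + 1 + 1)) (IsLocalRing.maximalIdeal R) t)
    have ht' : t = ybar ⊗ₜ[R] (1 : IsLocalRing.ResidueField R) := by
      have := congrArg (tensorQuotEquivQuotSMul (C (i + 1 + 1))
        (IsLocalRing.maximalIdeal R)).symm hybar
      have h7 := this.symm
      simp [tensorQuotEquivQuotSMul_symm_mk] at h7
      exact (LinearEquiv.symm_apply_apply _ t).symm.trans h7
    subst ht'
    rw [LinearMap.rTensor_tmul] at ht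
    -- (x - d y) ⊗ 1 = 0, hence x - d y ∈ 𝔪 • ⊤
    have hsub : ((x - d (i + 1) ybar) ⊗ₜ[R] (1 : IsLocalRing.ResidueField R)
        : C (i + 1) ⊗[R] IsLocalRing.ResidueField R) = 0 := by
      rw [TensorProduct.sub_tmul, ht]
      abel
    have hmem : x - d (i + 1) ybar ∈
        (IsLocalRing.maximalIdeal R) • (⊤ : Submodule R (C (i + 1))) := by
      have h2 := congrArg (tensorQuotEquivQuotSMul (C (i + 1))
        (IsLocalRing.maximalIdeal R)) hsub
      have h3 : tensorQuotEquivQuotSMul (C (i + 1)) (IsLocalRing.maximalIdeal R)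
          ((x - d (i + 1) ybar) ⊗ₜ[R] (1 : IsLocalRing.ResidueField R)) =
          Submodule.Quotient.mk (x - d (i + 1) ybar) := by
        have := tensorQuotEquivQuotSMul_tmul_mk (M := C (i + 1))
          (IsLocalRing.maximalIdeal R) (x - d (i + 1) ybar) 1
        rw [one_smul] at this
        exact this
      replace h2 := h3.symm.trans (h2.trans (map_zero _))
      exact (Submodule.Quotient.mk_eq_zero _).mp h2
    -- rewrite 𝔪 • ⊤ as ϖ • ⊤
    rw [hϖ.maximalIdeal_eq, Submodule.ideal_span_singleton_smul] at hmem
    rw [← SetLike.mem_coe, Submodule.coe_pointwise_smul] at hmem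
    obtain ⟨w, -, hw⟩ := Set.mem_smul_set.mp hmem
    -- w is a cycle since ϖ • d w = 0 and C i is torsion-free
    have hdw : d i w = 0 := by
      have h4 : ϖ • d i w = 0 := by
        have h5 : d i (x - d (i + 1) ybar) = 0 := by
          have h6 : d i (d (i + 1) ybar) = 0 := by
            simpa using LinearMap.congr_fun (hdd i) ybar
          rw [map_sub, h6, show d i x = 0 from hx]
          abel
        rw [← hw, map_smul] at h5
        exact h5
      rcases smul_eq_zero.mp h4 with h | h
      · exact absurd h hϖ.ne_zero
      · exact h
    have hxeq : x = d (i + 1) ybar + ϖ • w := eq_add_of_sub_eq' hw.symm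
    rw [hxeq]
    refine Submodule.add_mem _ (Submodule.mem_sup_left ⟨ybar, rfl⟩)
      (Submodule.mem_sup_right ?_)
    exact Submodule.smul_mem_smul
      (hϖ.maximalIdeal_eq ▸ Ideal.mem_span_singleton_self ϖ) hdw
  -- Nakayama
  have hFG : (LinearMap.ker (d i)).FG := by
    have : IsNoetherian R (C (i + 1)) := isNoetherian_of_isNoetherianRing_of_finite R _
    exact IsNoetherian.noetherian _
  exact Submodule.le_of_le_smul_of_le_jacobson_bot hFG
    (by simpa using IsLocalRing.maximalIdeal_le_jacobson (R := R) ⊥) key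
end

section
/- Every group homomorphism f from N to the additive group of 𝔽_p is an 𝔽_p-linear combination of the two homomorphisms α₁₂ : a ↦ π(a₁₂) and α₂₃ : a ↦ π(a₂₃); that is, there exist c₁, c₂ ∈ 𝔽_p such that f(a) = c₁·π(a₁₂) + c₂·π(a₂₃) for all a ∈ N. -/
open Matrix

variable {p : ℕ} [Fact p.Prime]

/-- `A` is an upper triangular unipotent 3×3 matrix over `ℤ_[p]`: diagonal entries `1`,
entries below the diagonal `0`.  The group `N` of the paper is the set of such matrices. -/
def IsUnipotentUpperTriangular {p : ℕ} [Fact p.Prime]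
    (A : Matrix (Fin 3) (Fin 3) ℤ_[p]) : Prop :=
  (∀ i : Fin 3, A i i = 1) ∧ ∀ i j : Fin 3, j < i → A i j = 0

noncomputable def UU (x y z : ℤ_[p]) : Matrix (Fin 3) (Fin 3) ℤ_[p] :=
  !![1, x, z; 0, 1, y; 0, 0, 1]

lemma UU_unip (x y z : ℤ_[p]) : IsUnipotentUpperTriangular (UU x y z) := by
  constructor
  · intro i; fin_cases i <;> simp [UU]
  · intro i j h
    fin_cases i <;> fin_cases j <;>
      first
        | exact absurd h (by decide)
        | simp [UU, Matrix.vecHead, Matrix.vecTail]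

lemma UU_mul (x y z x' y' z' : ℤ_[p]) :
    UU x y z * UU x' y' z' = UU (x + x') (y + y') (z + z' + x * y') := by
  ext i j
  fin_cases i <;> fin_cases j <;>
    simp [UU, Matrix.mul_apply, Fin.sum_univ_three, Matrix.vecHead, Matrix.vecTail] <;> ring

lemma unip_eq_UU {A : Matrix (Fin 3) (Fin 3) ℤ_[p]}
    (hA : IsUnipotentUpperTriangular A) : A = UU (A 0 1) (A 1 2) (A 0 2) := by
  obtain ⟨h1, h2⟩ := hA
  ext i j
  fin_cases i <;> fin_cases j <;>
    simp only [UU, cons_val', cons_val_zero, cons_val_one, head_cons, empty_val',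
      cons_val_fin_one, head_fin_const, of_apply, cons_val_two, tail_cons]
  · exact h1 0
  · rfl
  · rfl
  · exact h2 1 0 (by decide)
  · exact h1 1
  · rfl
  · exact h2 2 0 (by decide)
  · exact h2 2 1 (by decide)
  · exact h1 2

lemma additive_eq (g : ℤ_[p] → ZMod p) (hg : ∀ x y : ℤ_[p], g (x + y) = g x + g y)
    (x : ℤ_[p]) : g x = PadicInt.toZMod x * g 1 := by
  have g0 : g 0 = 0 := by have := hg 0 0; simpa using this.symm
  have gn : ∀ (n : ℕ) (y : ℤ_[p]), g (n * y) = n * g y := by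
    intro n
    induction n with
    | zero => intro y; simpa using g0
    | succ k ih => intro y; push_cast; rw [add_mul, one_mul, hg, ih]; ring
  have hspec := PadicInt.toZMod_spec x
  rw [PadicInt.maximalIdeal_eq_span_p, Ideal.mem_span_singleton] at hspec
  obtain ⟨y, hy⟩ := hspec
  have hx : x = (ZMod.cast (PadicInt.toZMod x) : ℤ_[p]) + (p : ℤ_[p]) * y := by
    rw [← hy]; ring
  have hcast : (ZMod.cast (PadicInt.toZMod x) : ℤ_[p]) =
      (((PadicInt.toZMod x).val : ℕ) : ℤ_[p]) := by
    rw [ZMod.natCast_val]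
  calc g x = g ((((PadicInt.toZMod x).val : ℕ) : ℤ_[p])) + g ((p : ℤ_[p]) * y) := by
        rw [← hg, ← hcast, ← hx]
    _ = ((PadicInt.toZMod x).val : ZMod p) * g 1 + (p : ZMod p) * g y := by
        rw [← gn, ← gn, mul_one]
    _ = PadicInt.toZMod x * g 1 := by
        rw [ZMod.natCast_val, ZMod.cast_id, ZMod.natCast_self, zero_mul, add_zero]

/-- every group homomorphism from `N` to the additive group `𝔽_p` is an
`𝔽_p`-linear combination of `α₁₂ : a ↦ π(a₁₂)` and `α₂₃ : a ↦ π(a₂₃)`. -/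
theorem stmt_11 {p : ℕ} [Fact p.Prime]
    (f : Matrix (Fin 3) (Fin 3) ℤ_[p] → ZMod p)
    (hf : ∀ A B : Matrix (Fin 3) (Fin 3) ℤ_[p],
      IsUnipotentUpperTriangular A → IsUnipotentUpperTriangular B →
      f (A * B) = f A + f B) :
    ∃ c₁ c₂ : ZMod p, ∀ A : Matrix (Fin 3) (Fin 3) ℤ_[p],
      IsUnipotentUpperTriangular A →
      f A = c₁ * PadicInt.toZMod (A 0 1) + c₂ * PadicInt.toZMod (A 1 2) := by
  have hfU : ∀ x y z x' y' z' : ℤ_[p],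
      f (UU (x + x') (y + y') (z + z' + x * y')) = f (UU x y z) + f (UU x' y' z') := by
    intro x y z x' y' z'
    rw [← UU_mul]; exact hf _ _ (UU_unip _ _ _) (UU_unip _ _ _)
  -- decomposition: f (UU x y z) = f (UU x 0 0) + f (UU 0 y 0) + f (UU 0 0 (z - x*y))?
  have hdec : ∀ x y z : ℤ_[p],
      f (UU x y z) = f (UU x 0 0) + f (UU 0 y 0) + f (UU 0 0 (z - x * y)) := by
    intro x y z
    have h1 := hfU 0 y 0 0 0 (z - x * y)
    have h2 := hfU x 0 0 0 y (z - x * y)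
    simp only [add_zero, zero_add, mul_zero, zero_mul] at h1 h2
    have h2' : f (UU x y z) = f (UU x 0 0) + f (UU 0 y (z - x * y)) := by
      have : z - x * y + x * y = z := by ring
      rw [← this] at h2 ⊢; convert h2 using 3 <;> ring
    rw [h2', h1, add_assoc]
  -- g13 vanishes
  have hg13 : ∀ z : ℤ_[p], f (UU 0 0 z) = 0 := by
    intro z
    have h1 := hfU 0 1 0 (-z) 0 0
    simp only [add_zero, zero_add, mul_zero, zero_mul] at h1
    have h2 := hdec (-z) 1 0
    simp only [zero_sub, neg_mul, one_mul, neg_neg] at h2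
    rw [h2] at h1
    simp only [mul_one] at h1
    linear_combination h1
  have key : ∀ x y z : ℤ_[p],
      f (UU x y z) = PadicInt.toZMod x * f (UU 1 0 0) + PadicInt.toZMod y * f (UU 0 1 0) := by
    intro x y z
    rw [hdec, hg13, add_zero]
    have a12 : ∀ x : ℤ_[p], f (UU x 0 0) = PadicInt.toZMod x * f (UU 1 0 0) := by
      apply additive_eq
      intro a b
      have := hfU a 0 0 b 0 0
      simpa using this
    have a23 : ∀ y : ℤ_[p], f (UU 0 y 0) = PadicInt.toZMod y * f (UU 0 1 0) := by
      apply additive_eq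
      intro a b
      have := hfU 0 a 0 0 b 0
      simpa using this
    rw [a12, a23]
  refine ⟨f (UU 1 0 0), f (UU 0 1 0), fun A hA => ?_⟩
  rw [unip_eq_UU hA, key]
  have e1 : (!![1, A 0 1, A 0 2; 0, 1, A 1 2; 0, 0, 1] : Matrix (Fin 3) (Fin 3) ℤ_[p]) 0 1
      = A 0 1 := rfl
  have e2 : (!![1, A 0 1, A 0 2; 0, 1, A 1 2; 0, 0, 1] : Matrix (Fin 3) (Fin 3) ℤ_[p]) 1 2
      = A 1 2 := rfl
  simp only [UU, e1, e2]
  ring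
end

section
/- The function γ₁ : N × N → 𝔽ₚ is a normalized 2-cocycle on N with values in 𝔽ₚ (for the trivial N-action): γ₁(a, 1) = γ₁(1, a) = 0 for every a ∈ N, and γ₁(b, c) − γ₁(a·b, c) + γ₁(a, b·c) − γ₁(a, b) = 0 for all a, b, c ∈ N. -/
/-- The 2-cochain `γ₁(a, b) = π(a₁₃·b₂₃ + a₁₂·q(b₂₃))` of the paper, where `q` is the
"halving" function with `2·q(x) = x² − x`. -/
noncomputable def gammaOne {p : ℕ} [Fact p.Prime] (q : ℤ_[p] → ℤ_[p])
    (A B : Matrix (Fin 3) (Fin 3) ℤ_[p]) : ZMod p :=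
  PadicInt.toZMod (A 0 2 * B 1 2 + A 0 1 * q (B 1 2))

/-- `γ₁` is a normalized 2-cocycle on `N` with values in `𝔽_p` (trivial
action). -/
theorem stmt_12 {p : ℕ} [Fact p.Prime]
    (q : ℤ_[p] → ℤ_[p]) (hq : ∀ x : ℤ_[p], 2 * q x = x ^ 2 - x) :
    (∀ A : Matrix (Fin 3) (Fin 3) ℤ_[p], IsUnipotentUpperTriangular A →
      gammaOne q A 1 = 0 ∧ gammaOne q 1 A = 0) ∧
    (∀ A B C : Matrix (Fin 3) (Fin 3) ℤ_[p],
      IsUnipotentUpperTriangular A → IsUnipotentUpperTriangular B →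
      IsUnipotentUpperTriangular C →
      gammaOne q B C - gammaOne q (A * B) C + gammaOne q A (B * C)
        - gammaOne q A B = 0) := by
  have h2 : (2 : ℤ_[p]) ≠ 0 := two_ne_zero
  have hq0 : q 0 = 0 := by
    apply mul_left_cancel₀ h2
    rw [hq]; ring
  have hqadd : ∀ y z : ℤ_[p], q (y + z) = q y + q z + y * z := by
    intro y z
    apply mul_left_cancel₀ h2
    simp only [mul_add, hq]; ring
  constructor
  · intro A hA
    constructor
    · simp [gammaOne, Matrix.one_apply_ne (show (1 : Fin 3) ≠ 2 by decide), hq0]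
    · have h01 : (1 : Matrix (Fin 3) (Fin 3) ℤ_[p]) 0 1 = 0 :=
        Matrix.one_apply_ne (by decide)
      have h02 : (1 : Matrix (Fin 3) (Fin 3) ℤ_[p]) 0 2 = 0 :=
        Matrix.one_apply_ne (by decide)
      simp [gammaOne, h01, h02]
  · intro A B C hA hB hC
    have mul01 : ∀ X Y : Matrix (Fin 3) (Fin 3) ℤ_[p], IsUnipotentUpperTriangular X →
        IsUnipotentUpperTriangular Y → (X * Y) 0 1 = X 0 1 + Y 0 1 := by
      intro X Y hX hY
      rw [Matrix.mul_apply, Fin.sum_univ_three, hX.1 0, hY.1 1,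
        hY.2 2 1 (by decide)]
      ring
    have mul12 : ∀ X Y : Matrix (Fin 3) (Fin 3) ℤ_[p], IsUnipotentUpperTriangular X →
        IsUnipotentUpperTriangular Y → (X * Y) 1 2 = X 1 2 + Y 1 2 := by
      intro X Y hX hY
      rw [Matrix.mul_apply, Fin.sum_univ_three, hX.1 1, hY.1 2,
        hX.2 1 0 (by decide)]
      ring
    have mul02 : ∀ X Y : Matrix (Fin 3) (Fin 3) ℤ_[p], IsUnipotentUpperTriangular X →
        IsUnipotentUpperTriangular Y → (X * Y) 0 2 = X 0 2 + Y 0 2 + X 0 1 * Y 1 2 := by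
      intro X Y hX hY
      rw [Matrix.mul_apply, Fin.sum_univ_three, hX.1 0, hY.1 2]
      ring
    simp only [gammaOne, mul01 A B hA hB, mul12 A B hA hB, mul02 A B hA hB,
      mul12 B C hB hC, mul02 B C hB hC]
    rw [← map_sub, ← map_add, ← map_sub]
    have : B 0 2 * C 1 2 + B 0 1 * q (C 1 2) -
        ((A 0 2 + B 0 2 + A 0 1 * B 1 2) * C 1 2 + (A 0 1 + B 0 1) * q (C 1 2)) +
        (A 0 2 * (B 1 2 + C 1 2) + A 0 1 * q (B 1 2 + C 1 2)) -
        (A 0 2 * B 1 2 + A 0 1 * q (B 1 2)) = 0 := by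
      rw [hqadd]; ring
    rw [this, map_zero]
end

section
/- For every pair (c₁, c₂) ∈ 𝔽ₚ × 𝔽ₚ with (c₁, c₂) ≠ (0, 0), the 2-cocycle c₁·γ₁ + c₂·γ₂ on N is not a coboundary: there is no function b : N → 𝔽ₚ such that c₁·γ₁(i, j) + c₂·γ₂(i, j) = b(j) − b(i·j) + b(i) for all i, j ∈ N. (Hence the classes of γ₁ and γ₂ are linearly independent in H²(N, 𝔽ₚ).) -/
/-- The 2-cochain `γ₂(a, b) = π(a₁₂·b₁₃ + q(a₁₂)·b₂₃)` of the paper. -/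
noncomputable def gammaTwo {p : ℕ} [Fact p.Prime] (q : ℤ_[p] → ℤ_[p])
    (A B : Matrix (Fin 3) (Fin 3) ℤ_[p]) : ZMod p :=
  PadicInt.toZMod (A 0 1 * B 0 2 + q (A 0 1) * B 1 2)


lemma uut_aux {p : ℕ} [Fact p.Prime] (x y z : ℤ_[p]) :
    IsUnipotentUpperTriangular !![1, x, y; 0, 1, z; 0, 0, 1] := by
  constructor
  · intro i; fin_cases i <;> simp
  · intro i j h; fin_cases i <;> fin_cases j <;>
      simp_all [Matrix.vecHead, Matrix.vecTail]

/-- no nontrivial `𝔽_p`-linear combination of `γ₁` and `γ₂` is a coboundary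
on `N`, i.e. the classes of `γ₁` and `γ₂` are linearly independent in `H²(N, 𝔽_p)`. -/
theorem stmt_14 {p : ℕ} [Fact p.Prime]
    (q : ℤ_[p] → ℤ_[p]) (hq : ∀ x : ℤ_[p], 2 * q x = x ^ 2 - x)
    (c₁ c₂ : ZMod p) (hc : (c₁, c₂) ≠ (0, 0)) :
    ¬ ∃ b : Matrix (Fin 3) (Fin 3) ℤ_[p] → ZMod p,
      ∀ A B : Matrix (Fin 3) (Fin 3) ℤ_[p],
        IsUnipotentUpperTriangular A → IsUnipotentUpperTriangular B →
        c₁ * gammaOne q A B + c₂ * gammaTwo q A B = b B - b (A * B) + b A := by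
  rintro ⟨b, hb⟩
  have hq0 : q 0 = 0 := by simpa using hq 0
  have hq1 : q 1 = 0 := by simpa using hq 1
  -- pair 1: A = E(0,1,0), B = E(0,0,1); they commute, forcing c₁ = 0
  have h1 := hb !![1,0,1;0,1,0;0,0,1] !![1,0,0;0,1,1;0,0,1] (uut_aux 0 1 0) (uut_aux 0 0 1)
  have h1' := hb !![1,0,0;0,1,1;0,0,1] !![1,0,1;0,1,0;0,0,1] (uut_aux 0 0 1) (uut_aux 0 1 0)
  have e1 : (!![1,0,1;0,1,0;0,0,1] : Matrix (Fin 3) (Fin 3) ℤ_[p]) * !![1,0,0;0,1,1;0,0,1]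
      = !![1,0,0;0,1,1;0,0,1] * !![1,0,1;0,1,0;0,0,1] := by
    simp [Matrix.mul_fin_three]
  rw [e1] at h1
  simp [gammaOne, gammaTwo, hq0, hq1] at h1 h1'
  have hc1 : c₁ = 0 := by linear_combination h1 - h1'
  -- pair 2: A = E(1,0,0), B = E(0,1,0); they commute, forcing c₂ = 0
  have h2 := hb !![1,1,0;0,1,0;0,0,1] !![1,0,1;0,1,0;0,0,1] (uut_aux 1 0 0) (uut_aux 0 1 0)
  have h2' := hb !![1,0,1;0,1,0;0,0,1] !![1,1,0;0,1,0;0,0,1] (uut_aux 0 1 0) (uut_aux 1 0 0)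
  have e2 : (!![1,1,0;0,1,0;0,0,1] : Matrix (Fin 3) (Fin 3) ℤ_[p]) * !![1,0,1;0,1,0;0,0,1]
      = !![1,0,1;0,1,0;0,0,1] * !![1,1,0;0,1,0;0,0,1] := by
    simp [Matrix.mul_fin_three]
  rw [e2] at h2
  simp [gammaOne, gammaTwo, hq0, hq1] at h2 h2'
  have hc2 : c₂ = 0 := by linear_combination h2 - h2'
  exact hc (by simp [hc1, hc2])
end

section
/- For any two group homomorphisms φ, ψ from N to the additive group of 𝔽ₚ, the 2-cocycle (a, a') ↦ φ(a)·ψ(a') on N is a coboundary: there exists a function b : N → 𝔽ₚ with b(1) = 0 such that φ(a)·ψ(a') = b(a') − b(a·a') + b(a) for all a, a' ∈ N. (This expresses that the cup product H¹(N, 𝔽ₚ) × H¹(N, 𝔽ₚ) → H²(N, 𝔽ₚ) is the zero map.) -/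
namespace Stmt15
variable {p : ℕ} [Fact p.Prime]

noncomputable def M (x u z : ℤ_[p]) : Matrix (Fin 3) (Fin 3) ℤ_[p] :=
  !![1, x, z; 0, 1, u; 0, 0, 1]

lemma isUnip_M (x u z : ℤ_[p]) : IsUnipotentUpperTriangular (M x u z) := by
  constructor
  · intro i; fin_cases i <;> simp [M]
  · intro i j h
    fin_cases i <;> fin_cases j <;> first
      | exact absurd h (by decide)
      | simp [M, Matrix.vecHead, Matrix.vecTail]

lemma M_mul (x u z x' u' z' : ℤ_[p]) :
    M x u z * M x' u' z' = M (x + x') (u + u') (z + z' + x * u') := by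
  ext i j
  fin_cases i <;> fin_cases j <;>
    simp [M, Matrix.mul_apply, Fin.sum_univ_three, Matrix.vecHead, Matrix.vecTail] <;> ring

lemma eq_M (A : Matrix (Fin 3) (Fin 3) ℤ_[p]) (h : IsUnipotentUpperTriangular A) :
    A = M (A 0 1) (A 1 2) (A 0 2) := by
  ext i j
  fin_cases i <;> fin_cases j <;>
    simp [M, Matrix.vecHead, Matrix.vecTail] <;>
    first
      | exact h.1 _
      | exact h.2 _ _ (by decide)

@[simp] lemma M_01 (x u z : ℤ_[p]) : M x u z 0 1 = x := by simp [M]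
@[simp] lemma M_12 (x u z : ℤ_[p]) : M x u z 1 2 = u := by simp [M]
@[simp] lemma M_02 (x u z : ℤ_[p]) : M x u z 0 2 = z := by simp [M]


lemma f_zero {f : ℤ_[p] → ZMod p} (hf : ∀ x y, f (x + y) = f x + f y) : f 0 = 0 := by
  have := hf 0 0
  simp only [add_zero] at this
  exact (right_eq_add.mp this).symm ▸ rfl

lemma nat_mul {f : ℤ_[p] → ZMod p} (hf : ∀ x y, f (x + y) = f x + f y) :
    ∀ (n : ℕ) (y : ℤ_[p]), f ((n : ℤ_[p]) * y) = (n : ZMod p) * f y := by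
  intro n y
  induction n with
  | zero => simpa using f_zero hf
  | succ n ih =>
      have : ((n + 1 : ℕ) : ℤ_[p]) * y = (n : ℤ_[p]) * y + y := by push_cast; ring
      rw [this, hf, ih]
      push_cast
      ring

lemma dvd_of_toZMod_eq_zero {x : ℤ_[p]} (h : PadicInt.toZMod x = 0) : (p : ℤ_[p]) ∣ x := by
  have : x ∈ RingHom.ker (PadicInt.toZMod : ℤ_[p] →+* ZMod p) := h
  rw [PadicInt.ker_toZMod, PadicInt.maximalIdeal_eq_span_p, Ideal.mem_span_singleton] at this
  exact this

/-- decompose x = n + p y with n = (toZMod x).val -/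
lemma exists_rep (x : ℤ_[p]) :
    ∃ y : ℤ_[p], x = (((PadicInt.toZMod x).val : ℕ) : ℤ_[p]) + (p : ℤ_[p]) * y := by
  have h : PadicInt.toZMod (x - (((PadicInt.toZMod x).val : ℕ) : ℤ_[p])) = 0 := by
    rw [map_sub, map_natCast, ZMod.natCast_val, ZMod.cast_id, sub_self]
  obtain ⟨y, hy⟩ := dvd_of_toZMod_eq_zero h
  exact ⟨y, by rw [← hy]; ring⟩

lemma additive_struct {f : ℤ_[p] → ZMod p} (hf : ∀ x y, f (x + y) = f x + f y) (x : ℤ_[p]) :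
    f x = PadicInt.toZMod x * f 1 := by
  obtain ⟨y, hy⟩ := exists_rep x
  have h1 : f ((((PadicInt.toZMod x).val : ℕ) : ℤ_[p])) = PadicInt.toZMod x * f 1 := by
    have := nat_mul hf (PadicInt.toZMod x).val 1
    rw [mul_one] at this
    rw [this, ZMod.natCast_val, ZMod.cast_id]
  have h2 : f ((p : ℤ_[p]) * y) = 0 := by
    have := nat_mul hf p y
    simpa [ZMod.natCast_self] using this
  calc f x = f ((((PadicInt.toZMod x).val : ℕ) : ℤ_[p]) + (p : ℤ_[p]) * y) := by rw [← hy]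
    _ = _ := by rw [hf, h1, h2, add_zero]

/-- any ring hom `ℤ_[p] →+* ZMod p` agrees with `toZMod` -/
lemma ringHom_eq_toZMod (f : ℤ_[p] →+* ZMod p) (x : ℤ_[p]) : f x = PadicInt.toZMod x := by
  obtain ⟨y, hy⟩ := exists_rep x
  conv_lhs => rw [hy]
  rw [map_add, map_mul, map_natCast, map_natCast, ZMod.natCast_self, zero_mul, add_zero,
    ZMod.natCast_val, ZMod.cast_id]


noncomputable def q (x : ℤ_[p]) : ZMod p :=
  if p = 2 then
    (((PadicInt.toZModPow 2 x).val * ((PadicInt.toZModPow 2 x).val - 1) / 2 : ℕ) : ZMod p)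
  else PadicInt.toZMod (x * (x - 1)) * (2 : ZMod p)⁻¹

lemma q_zero : q (0 : ℤ_[p]) = 0 := by
  unfold q
  split
  · simp
  · simp

lemma key4 : ∀ s t : ZMod (2 ^ 2),
    (((s + t).val * ((s + t).val - 1) / 2 : ℕ) : ZMod 2) =
      ((s.val * (s.val - 1) / 2 : ℕ) : ZMod 2) + ((t.val * (t.val - 1) / 2 : ℕ) : ZMod 2) +
        ZMod.castHom (by norm_num : (2:ℕ) ∣ 2 ^ 2) (ZMod 2) s *
          ZMod.castHom (by norm_num : (2:ℕ) ∣ 2 ^ 2) (ZMod 2) t := by decide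

lemma q_add (x y : ℤ_[p]) :
    q (x + y) = q x + q y + PadicInt.toZMod x * PadicInt.toZMod y := by
  unfold q
  split
  case isTrue hp =>
    subst hp
    have hcast : ∀ w : ℤ_[2], PadicInt.toZMod w =
        ZMod.castHom (by norm_num : (2:ℕ) ∣ 2 ^ 2) (ZMod 2) (PadicInt.toZModPow 2 w) := by
      intro w
      exact (ringHom_eq_toZMod ((ZMod.castHom (by norm_num : (2:ℕ) ∣ 2 ^ 2) (ZMod 2)).comp
        (PadicInt.toZModPow 2)) w).symm
    rw [hcast, hcast, map_add]
    exact key4 (PadicInt.toZModPow 2 x) (PadicInt.toZModPow 2 y)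
  case isFalse hp =>
    have hpd : ¬ ((p:ℕ) ∣ 2) := fun h =>
      hp ((Nat.prime_dvd_prime_iff_eq Fact.out Nat.prime_two).mp h)
    have h2 : (2 : ZMod p) ≠ 0 := by
      rw [show (2 : ZMod p) = ((2:ℕ) : ZMod p) by push_cast; ring, Ne,
        ZMod.natCast_eq_zero_iff]
      exact hpd
    have key : (x + y) * (x + y - 1) = x * (x - 1) + y * (y - 1) + 2 * (x * y) := by ring
    rw [key, map_add, map_add, map_mul, map_mul, map_mul, map_ofNat]
    field_simp
    rw [map_mul]
    ring


lemma hom_struct (φ : Matrix (Fin 3) (Fin 3) ℤ_[p] → ZMod p)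
    (hφ : ∀ A B : Matrix (Fin 3) (Fin 3) ℤ_[p],
      IsUnipotentUpperTriangular A → IsUnipotentUpperTriangular B →
      φ (A * B) = φ A + φ B) (x u z : ℤ_[p]) :
    φ (M x u z) = PadicInt.toZMod x * φ (M 1 0 0) + PadicInt.toZMod u * φ (M 0 1 0) := by
  have key : ∀ x u z x' u' z' : ℤ_[p],
      φ (M (x+x') (u+u') (z+z'+x*u')) = φ (M x u z) + φ (M x' u' z') := by
    intro x u z x' u' z'
    rw [← M_mul]
    exact hφ _ _ (isUnip_M _ _ _) (isUnip_M _ _ _)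
  have hxu0 : ∀ x u : ℤ_[p], φ (M x u (x*u)) = φ (M x 0 0) + φ (M 0 u 0) := by
    intro x u; simpa using key x 0 0 0 u 0
  have hxu1 : ∀ x u : ℤ_[p], φ (M x u 0) = φ (M 0 u 0) + φ (M x 0 0) := by
    intro x u; simpa using key 0 u 0 x 0 0
  have hsplit : ∀ x u w : ℤ_[p], φ (M x u w) = φ (M x u 0) + φ (M 0 0 w) := by
    intro x u w; simpa using key x u 0 0 0 w
  have hH : ∀ w : ℤ_[p], φ (M 0 0 w) = 0 := by
    intro w
    have e1 := hxu0 w 1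
    have e2 := hsplit w 1 (w*1)
    have e3 := hxu1 w 1
    rw [mul_one] at e1 e2
    linear_combination e1 - e2 - e3
  have hf' : ∀ x : ℤ_[p], φ (M x 0 0) = PadicInt.toZMod x * φ (M 1 0 0) :=
    fun x => additive_struct (f := fun t => φ (M t 0 0))
      (by intro a b; simpa using key a 0 0 b 0 0) x
  have hg' : ∀ u : ℤ_[p], φ (M 0 u 0) = PadicInt.toZMod u * φ (M 0 1 0) :=
    fun u => additive_struct (f := fun t => φ (M 0 t 0))
      (by intro a b; simpa using key 0 a 0 0 b 0) u
  rw [hsplit x u z, hH, add_zero, hxu1, hf', hg']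
  ring

end Stmt15

/-- the cup product of any two homomorphisms `N → 𝔽_p` is a coboundary,
i.e. the cup product `H¹(N, 𝔽_p) × H¹(N, 𝔽_p) → H²(N, 𝔽_p)` is the zero map. -/
theorem stmt_15 {p : ℕ} [Fact p.Prime]
    (φ ψ : Matrix (Fin 3) (Fin 3) ℤ_[p] → ZMod p)
    (hφ : ∀ A B : Matrix (Fin 3) (Fin 3) ℤ_[p],
      IsUnipotentUpperTriangular A → IsUnipotentUpperTriangular B →
      φ (A * B) = φ A + φ B)
    (hψ : ∀ A B : Matrix (Fin 3) (Fin 3) ℤ_[p],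
      IsUnipotentUpperTriangular A → IsUnipotentUpperTriangular B →
      ψ (A * B) = ψ A + ψ B) :
    ∃ b : Matrix (Fin 3) (Fin 3) ℤ_[p] → ZMod p, b 1 = 0 ∧
      ∀ A A' : Matrix (Fin 3) (Fin 3) ℤ_[p],
        IsUnipotentUpperTriangular A → IsUnipotentUpperTriangular A' →
        φ A * ψ A' = b A' - b (A * A') + b A := by

  classical
  refine ⟨fun A =>
    -(φ (Stmt15.M 1 0 0) * ψ (Stmt15.M 1 0 0)) * Stmt15.q (A 0 1)
      - (φ (Stmt15.M 0 1 0) * ψ (Stmt15.M 0 1 0)) * Stmt15.q (A 1 2)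
      - (φ (Stmt15.M 1 0 0) * ψ (Stmt15.M 0 1 0) - φ (Stmt15.M 0 1 0) * ψ (Stmt15.M 1 0 0))
          * PadicInt.toZMod (A 0 2)
      - (φ (Stmt15.M 0 1 0) * ψ (Stmt15.M 1 0 0))
          * (PadicInt.toZMod (A 0 1) * PadicInt.toZMod (A 1 2)), ?_, ?_⟩
  · have h01 : (1 : Matrix (Fin 3) (Fin 3) ℤ_[p]) 0 1 = 0 := Matrix.one_apply_ne (by decide)
    have h12 : (1 : Matrix (Fin 3) (Fin 3) ℤ_[p]) 1 2 = 0 := Matrix.one_apply_ne (by decide)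
    have h02 : (1 : Matrix (Fin 3) (Fin 3) ℤ_[p]) 0 2 = 0 := Matrix.one_apply_ne (by decide)
    simp [h01, h12, h02, Stmt15.q_zero]
  · intro A A' hA hA'
    obtain ⟨x, u, z, rfl⟩ : ∃ x u z, A = Stmt15.M x u z := ⟨_, _, _, Stmt15.eq_M A hA⟩
    obtain ⟨x', u', z', rfl⟩ : ∃ x u z, A' = Stmt15.M x u z := ⟨_, _, _, Stmt15.eq_M A' hA'⟩
    rw [Stmt15.M_mul, Stmt15.hom_struct φ hφ x u z, Stmt15.hom_struct ψ hψ x' u' z']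
    simp only [Stmt15.M_01, Stmt15.M_12, Stmt15.M_02, Stmt15.q_add, map_add, map_mul]
    ring
end
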